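/- Let X be an infinite set of cardinality κ and let G be the group of all permutations of X with finite support, acting on X. If Y ⊆ X satisfies |X \ Y| = κ, then Y is not κ-large: for every F ⊆ G with |F| < κ, we have F·Y ≠ X. Consequently, X cannot be partitioned into two κ-large subsets. -/
import Mathlib


open Cardinal

lemma aux_main (X : Type*) [Infinite X] (Y : Set X) (hY : #(↥Yᶜ) = #X)
    (F : Set (Equiv.Perm X)) (hfin : ∀ f ∈ F, {x : X | f x ≠ x}.Finite)
    (hF : #F < #X) : (⋃ f ∈ F, f '' Y) ≠ Set.univ := by
  intro hcov
  set S : Set X := ⋃ f ∈ F, {x : X | f x ≠ x} with hS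
  -- cardinality of S is < #X
  have hScard : #S < #X := by
    rcases Set.finite_or_infinite F with hFfin | hFinf
    · have : S.Finite := Set.Finite.biUnion hFfin (fun f hf => hfin f hf)
      exact lt_of_lt_of_le this.lt_aleph0 (Cardinal.aleph0_le_mk X)
    · have h1 : #S ≤ #F * ℵ₀ := by
        refine le_trans (Cardinal.mk_biUnion_le _ F) ?_
        refine mul_le_mul_right (ciSup_le' fun ⟨f, hf⟩ => ?_) _
        exact le_of_lt (hfin f hf).lt_aleph0
      have hℵ : ℵ₀ < #X := lt_of_le_of_lt (Cardinal.infinite_iff.mp hFinf.to_subtype) hF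
      exact lt_of_le_of_lt h1 (Cardinal.mul_lt_of_lt hℵ.le hF hℵ)
  -- the union is contained in Y ∪ S
  have hsub : (⋃ f ∈ F, f '' Y) ⊆ Y ∪ S := by
    rintro x hx
    simp only [Set.mem_iUnion] at hx
    obtain ⟨f, hf, y, hy, rfl⟩ := hx
    by_cases h : f y = y
    · left; rwa [h]
    · right
      refine Set.mem_biUnion hf ?_
      simp only [Set.mem_setOf_eq]
      intro h2
      exact h (f.injective h2)
  -- hence Yᶜ ⊆ S, contradiction on cardinalities
  have hYc : (Yᶜ : Set X) ⊆ S := by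
    intro x hx
    have : x ∈ Y ∪ S := hsub (hcov ▸ Set.mem_univ x)
    rcases this with h | h
    · exact absurd h hx
    · exact h
  have := Cardinal.mk_le_mk_of_subset hYc
  rw [hY] at this
  exact absurd this (not_le.mpr hScard)

theorem finitary_perm_not_kappa_large (X : Type*) [Infinite X] :
    (∀ Y : Set X, #(↥Yᶜ) = #X →
      ∀ F : Set (Equiv.Perm X), (∀ f ∈ F, {x : X | f x ≠ x}.Finite) → #F < #X →
        (⋃ f ∈ F, f '' Y) ≠ Set.univ) ∧
    ¬ ∃ Y₁ Y₂ : Set X, Disjoint Y₁ Y₂ ∧ Y₁ ∪ Y₂ = Set.univ ∧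
        (∃ F : Set (Equiv.Perm X), (∀ f ∈ F, {x : X | f x ≠ x}.Finite) ∧ #F < #X ∧
          (⋃ f ∈ F, f '' Y₁) = Set.univ) ∧
        (∃ F : Set (Equiv.Perm X), (∀ f ∈ F, {x : X | f x ≠ x}.Finite) ∧ #F < #X ∧
          (⋃ f ∈ F, f '' Y₂) = Set.univ) := by
  constructor
  · exact fun Y hY F h1 h2 => aux_main X Y hY F h1 h2
  · rintro ⟨Y₁, Y₂, hdisj, hunion, ⟨F₁, hF₁fin, hF₁card, hF₁cov⟩, ⟨F₂, hF₂fin, hF₂card, hF₂cov⟩⟩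
    have hcomp1 : Y₁ᶜ = Y₂ := by
      apply Set.Subset.antisymm
      · intro x hx
        have : x ∈ Y₁ ∪ Y₂ := hunion ▸ Set.mem_univ x
        rcases this with h | h
        · exact absurd h hx
        · exact h
      · exact Set.disjoint_left.mp hdisj.symm
    have hcomp2 : Y₂ᶜ = Y₁ := by rw [← hcomp1, compl_compl]
    -- one of Y₁, Y₂ has cardinality #X
    have hsum : #X ≤ #Y₁ + #Y₂ := by
      have := Cardinal.mk_union_le Y₁ Y₂
      rw [hunion, Cardinal.mk_univ] at this
      exact this
    have : #X ≤ #Y₁ ∨ #X ≤ #Y₂ := by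
      by_contra h
      push_neg at h
      have := Cardinal.add_lt_of_lt (Cardinal.aleph0_le_mk X) h.1 h.2
      exact absurd hsum (not_le.mpr this)
    rcases this with h | h
    · have hY₂c : #(↥Y₂ᶜ) = #X := by
        rw [hcomp2]
        exact le_antisymm (Cardinal.mk_le_mk_of_subset (Set.subset_univ Y₁) |>.trans
          (by rw [Cardinal.mk_univ])) h
      exact aux_main X Y₂ hY₂c F₂ hF₂fin hF₂card hF₂cov
    · have hY₁c : #(↥Y₁ᶜ) = #X := by
        rw [hcomp1]
        exact le_antisymm (Cardinal.mk_le_mk_of_subset (Set.subset_univ Y₂) |>.trans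
          (by rw [Cardinal.mk_univ])) h
      exact aux_main X Y₁ hY₁c F₁ hF₁fin hF₁card hF₁cov
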